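/- Let c < d be real numbers and n ≥ 1. Let A be a monic real polynomial of degree n and B a monic real polynomial of degree n−1, such that all (real) roots of A and of B lie in the open interval (c,d) and both A and B split into linear factors over ℝ. Let γ be a nonzero real and set Q = A + γ·B. Assume Q = ∏_{i=1}^n (X − z_i) for real numbers z_1 ≤ z_2 ≤ … ≤ z_n with z_i ∈ (c,d) for all 1 ≤ i ≤ n−1. Then z_n > d if and only if γ < −A(d)/B(d) < 0; in particular −A(d)/B(d) < 0 always holds. -/

import Mathlib

open Polynomial

lemma eval_pos_of_roots_lt (d : ℝ) (A : Polynomial ℝ) (hA : A.Monic)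
    (hs : (A.map (RingHom.id ℝ)).Splits) (h : ∀ x ∈ A.roots, x < d) : 0 < A.eval d := by
  have hEq := Polynomial.Splits.eq_prod_roots_of_monic (by rw [Polynomial.map_id] at hs; exact hs) hA
  have : A.eval d = (A.roots.map (fun r => d - r)).prod := by
    conv_lhs => rw [hEq]
    rw [Polynomial.eval_multiset_prod, Multiset.map_map]
    simp
  rw [this]
  apply Multiset.prod_pos
  intro x hx
  obtain ⟨r, hr, rfl⟩ := Multiset.mem_map.mp hx
  have := h r hr
  linarith

/-- the largest zero of the quasi-Christoffel polynomial `Q = A + γB`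
lies to the right of the interval of orthogonality `(c,d)` iff `γ < -A(d)/B(d) < 0`. -/
theorem quasiChristoffel_zero_right_of_interval
    (c d : ℝ) (hcd : c < d) (n : ℕ) (hn : 1 ≤ n)
    (A B : Polynomial ℝ)
    (hAmonic : A.Monic) (hAdeg : A.natDegree = n)
    (hBmonic : B.Monic) (hBdeg : B.natDegree = n - 1)
    (hAsplit : (A.map (RingHom.id ℝ)).Splits) (hBsplit : (B.map (RingHom.id ℝ)).Splits)
    (hAroots : ∀ x ∈ A.roots, c < x ∧ x < d)
    (hBroots : ∀ x ∈ B.roots, c < x ∧ x < d)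
    (γ : ℝ) (hγ : γ ≠ 0)
    (z : ℕ → ℝ)
    (hQ : A + Polynomial.C γ * B = ∏ i ∈ Finset.Icc 1 n, (X - Polynomial.C (z i)))
    (hmono : ∀ i j : ℕ, 1 ≤ i → i ≤ j → j ≤ n → z i ≤ z j)
    (hzin : ∀ i : ℕ, 1 ≤ i → i ≤ n - 1 → c < z i ∧ z i < d) :
    (d < z n ↔ γ < -A.eval d / B.eval d) ∧ -A.eval d / B.eval d < 0 := by
  have hAd : 0 < A.eval d := eval_pos_of_roots_lt d A hAmonic hAsplit fun x hx => (hAroots x hx).2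
  have hBd : 0 < B.eval d := eval_pos_of_roots_lt d B hBmonic hBsplit fun x hx => (hBroots x hx).2
  -- positivity of product over Icc 1 (n-1)
  have hP : 0 < ∏ i ∈ Finset.Icc 1 (n - 1), (d - z i) := by
    apply Finset.prod_pos
    intro i hi
    rw [Finset.mem_Icc] at hi
    have := (hzin i hi.1 hi.2).2
    linarith
  -- evaluate hQ at d
  have hEval : A.eval d + γ * B.eval d
      = (∏ i ∈ Finset.Icc 1 (n - 1), (d - z i)) * (d - z n) := by
    have h1 : (A + Polynomial.C γ * B).eval d = A.eval d + γ * B.eval d := by simp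
    have h2 : (∏ i ∈ Finset.Icc 1 n, (X - Polynomial.C (z i))).eval d
        = ∏ i ∈ Finset.Icc 1 n, (d - z i) := by
      rw [Polynomial.eval_prod]; simp
    have h3 : ∏ i ∈ Finset.Icc 1 n, (d - z i)
        = (∏ i ∈ Finset.Icc 1 (n - 1), (d - z i)) * (d - z n) := by
      have hn' : n = (n - 1) + 1 := (Nat.succ_pred_eq_of_pos hn).symm
      rw [hn', Finset.prod_Icc_succ_top (by omega), ← hn']
    rw [← h1, hQ, h2, h3]
  constructor
  · constructor
    · intro hd
      have hQd : A.eval d + γ * B.eval d < 0 := by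
        rw [hEval]
        exact mul_neg_of_pos_of_neg hP (by linarith)
      rw [lt_div_iff₀ hBd]
      linarith
    · intro hg
      rw [lt_div_iff₀ hBd] at hg
      have hQd : A.eval d + γ * B.eval d < 0 := by linarith
      rw [hEval] at hQd
      nlinarith
  · exact div_neg_of_neg_of_pos (by linarith) hBd
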